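/- arXiv:1407.1114 — 2 statements merged into one kernel-verified Lean document; each statement's English description precedes it below -/
import Mathlib

section
/- Let d ≥ 1, let λ₁, …, λ_d be positive reals, let a₁, …, a_d be independent standard normal random variables, and set S = Σᵢ λᵢ(aᵢ² − 1) and θ = (2·Σᵢ λᵢ²)^{−1/2}. If θ·λᵢ ≤ 1/2 for every i, then E[exp(θS/2)] ≤ e^{1/4}. -/
open MeasureTheory ProbabilityTheory Real

open scoped NNReal ENNReal

lemma key_ineq {b : ℝ} (h0 : 0 ≤ b) (h1 : b ≤ 1/2) : Real.exp (-b - b^2) ≤ 1 - b := by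
  have e1 : 1 + b + b^2/2 ≤ Real.exp b := Real.quadratic_le_exp_of_nonneg h0
  have e2 : 1 + b^2 ≤ Real.exp (b^2) := by nlinarith [Real.add_one_le_exp (b^2)]
  have hpos : 0 < Real.exp b * Real.exp (b^2) := by positivity
  have h : Real.exp (-b - b^2) = 1 / (Real.exp b * Real.exp (b^2)) := by
    rw [← Real.exp_add, one_div, ← Real.exp_neg]
    congr 1
    ring
  rw [h, div_le_iff₀ hpos]
  have h12 : (1 + b + b^2/2) * (1 + b^2) ≤ Real.exp b * Real.exp (b^2) :=
    mul_le_mul e1 e2 (by positivity) (Real.exp_pos b).le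
  have h13 : (1 - b) * ((1 + b + b^2/2) * (1 + b^2)) ≤ (1 - b) * (Real.exp b * Real.exp (b^2)) :=
    mul_le_mul_of_nonneg_left h12 (by linarith)
  have h2 : b^2 ≤ (1/2:ℝ)^2 := pow_le_pow_left₀ h0 h1 2
  have h3 : b^3 ≤ (1/2:ℝ)^3 := pow_le_pow_left₀ h0 h1 3
  have hkey : 0 ≤ b^2 * (1 - b - b^2 - b^3) := mul_nonneg (sq_nonneg b) (by nlinarith)
  nlinarith [h13, hkey]

lemma gauss_exp_sq (c : ℝ) (hc : c < 1/2) :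
    ∫ x, Real.exp (c * (x ^ 2 - 1)) ∂(gaussianReal 0 1) =
      Real.exp (-c) * (Real.sqrt (1 - 2*c))⁻¹ := by
  have hb : (0:ℝ) < 1/2 - c := by linarith
  rw [gaussianReal_of_var_ne_zero 0 one_ne_zero]
  have hpdf : (gaussianPDF 0 1) = fun x => ((Real.toNNReal (gaussianPDFReal 0 1 x) : ℝ≥0) : ℝ≥0∞) := by
    ext x
    simp [gaussianPDF, ENNReal.ofReal]
  rw [hpdf, integral_withDensity_eq_integral_smul
    ((measurable_gaussianPDFReal 0 1).real_toNNReal) (fun x => Real.exp (c * (x ^ 2 - 1)))]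
  have hptw : ∀ x : ℝ, (Real.toNNReal (gaussianPDFReal 0 1 x)) • Real.exp (c * (x ^ 2 - 1))
      = ((Real.sqrt (2*π))⁻¹ * Real.exp (-c)) * Real.exp (-(1/2 - c) * x ^ 2) := by
    intro x
    rw [NNReal.smul_def, Real.coe_toNNReal _ (gaussianPDFReal_nonneg _ _ _)]
    simp only [gaussianPDFReal, NNReal.coe_one, mul_one, sub_zero]
    rw [smul_eq_mul, mul_assoc, mul_assoc, ← Real.exp_add, ← Real.exp_add]
    congr 1
    ring
  rw [integral_congr_ae (Filter.Eventually.of_forall hptw), integral_const_mul,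
    integral_gaussian (1/2 - c)]
  have h2 : Real.sqrt (π/(1/2 - c)) = Real.sqrt π / Real.sqrt (1/2 - c) :=
    Real.sqrt_div pi_pos.le _
  have h3 : Real.sqrt (2*π) = Real.sqrt 2 * Real.sqrt π :=
    Real.sqrt_mul (by norm_num) _
  have h4 : Real.sqrt (1 - 2*c) = Real.sqrt 2 * Real.sqrt (1/2 - c) := by
    rw [show (1:ℝ) - 2*c = 2*(1/2 - c) by ring]
    exact Real.sqrt_mul (by norm_num) _
  have hπ : Real.sqrt π ≠ 0 := (Real.sqrt_pos.mpr pi_pos).ne'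
  rw [h2, h3, h4, mul_inv, div_eq_mul_inv, mul_inv]
  have hππ : (Real.sqrt π)⁻¹ * Real.sqrt π = 1 := inv_mul_cancel₀ hπ
  linear_combination (Real.exp (-c) * (Real.sqrt 2)⁻¹ * (Real.sqrt (1/2 - c))⁻¹) * hππ

/-- The Chernoff-parameter bound in the proof of Lemma 7.1: with
`S = ∑ i, λᵢ (aᵢ² - 1)` for i.i.d. standard normals `aᵢ` and
`θ = (2 ∑ λᵢ²)^{-1/2}`, if `θ λᵢ ≤ 1/2` for every `i`, then
`E[exp(θS/2)] ≤ e^{1/4}`. -/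
theorem mgf_gaussian_quadratic_form_le
    {Ω : Type*} [MeasurableSpace Ω] (μ : Measure Ω) [IsProbabilityMeasure μ]
    (d : ℕ) (hd : 1 ≤ d) (l : Fin d → ℝ) (hl : ∀ i, 0 < l i)
    (a : Fin d → Ω → ℝ) (hmeas : ∀ i, Measurable (a i))
    (hindep : iIndepFun a μ)
    (hlaw : ∀ i, μ.map (a i) = gaussianReal 0 1)
    (θ : ℝ) (hθdef : θ = (2 * ∑ i, (l i) ^ 2) ^ (-(1 : ℝ) / 2))
    (hθl : ∀ i, θ * l i ≤ 1 / 2) :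
    ∫ ω, Real.exp (θ / 2 * ∑ i, l i * ((a i ω) ^ 2 - 1)) ∂μ ≤ Real.exp (1 / 4) := by
  have : Nonempty (Fin d) := ⟨⟨0, hd⟩⟩
  have hSsum : 0 < ∑ i, (l i) ^ 2 :=
    Finset.sum_pos (fun i _ => pow_pos (hl i) 2) Finset.univ_nonempty
  have hS : (0:ℝ) < 2 * ∑ i, (l i) ^ 2 := by linarith
  have hθpos : 0 < θ := hθdef ▸ Real.rpow_pos_of_pos hS _
  have hθsq : θ ^ 2 * (2 * ∑ i, (l i) ^ 2) = 1 := by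
    rw [hθdef, ← Real.rpow_natCast _ 2, ← Real.rpow_mul hS.le]
    norm_num
    rw [Real.rpow_neg_one]
    field_simp
  -- the summand random variables
  set X : Fin d → Ω → ℝ := fun i ω => l i * ((a i ω) ^ 2 - 1) with hX
  have hXmeas : ∀ i, Measurable (X i) := fun i => by
    apply Measurable.const_mul
    exact ((hmeas i).pow_const 2).sub_const 1
  have hXindep : iIndepFun X μ :=
    hindep.comp (fun i x => l i * (x ^ 2 - 1))
      (fun i => ((measurable_id.pow_const 2).sub_const 1).const_mul _)
  have hmgfeq : (∫ ω, Real.exp (θ / 2 * ∑ i, l i * ((a i ω) ^ 2 - 1)) ∂μ)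
      = mgf (∑ i, X i) μ (θ / 2) := by
    simp only [mgf, Finset.sum_apply, hX]
  rw [hmgfeq, iIndepFun.mgf_sum hXindep hXmeas Finset.univ]
  -- compute each mgf
  have hci : ∀ i : Fin d, mgf (X i) μ (θ / 2)
      = Real.exp (-(θ * l i / 2)) * (Real.sqrt (1 - 2 * (θ * l i / 2)))⁻¹ := by
    intro i
    have hc : θ * l i / 2 < 1/2 := by
      have := hθl i
      have := mul_pos hθpos (hl i)
      linarith
    have hf : AEStronglyMeasurable (fun x : ℝ => Real.exp ((θ * l i / 2) * (x ^ 2 - 1)))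
        (μ.map (a i)) := (by fun_prop : Continuous fun x : ℝ =>
          Real.exp ((θ * l i / 2) * (x ^ 2 - 1))).aestronglyMeasurable
    have h2 : (∫ x, Real.exp ((θ * l i / 2) * (x ^ 2 - 1)) ∂(μ.map (a i)))
        = Real.exp (-(θ * l i / 2)) * (Real.sqrt (1 - 2 * (θ * l i / 2)))⁻¹ := by
      rw [hlaw i]
      exact gauss_exp_sq _ hc
    rw [integral_map (hmeas i).aemeasurable hf] at h2
    rw [← h2]
    refine integral_congr_ae (Filter.Eventually.of_forall fun ω => ?_)
    simp only [hX]
    rw [show θ / 2 * (l i * ((a i ω) ^ 2 - 1)) = θ * l i / 2 * ((a i ω) ^ 2 - 1) from by ring]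
  -- bound each factor
  have hfac : ∀ i : Fin d, mgf (X i) μ (θ / 2) ≤ Real.exp ((θ * l i) ^ 2 / 2) := by
    intro i
    rw [hci i]
    set b := θ * l i with hbdef
    have hb0 : 0 ≤ b := (mul_pos hθpos (hl i)).le
    have hb1 : b ≤ 1/2 := hθl i
    have h2c : 1 - 2 * (b / 2) = 1 - b := by ring
    have hkey : Real.exp (-b - b^2) ≤ 1 - b := key_ineq hb0 hb1
    have hsqrt : Real.exp (-(b + b^2)/2) ≤ Real.sqrt (1 - b) := by
      rw [show (-(b + b^2)/2 : ℝ) = (-b - b^2)/2 by ring]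
      have : Real.exp ((-b - b^2)/2) ^ 2 = Real.exp (-b - b^2) := by
        rw [← Real.exp_nat_mul]
        congr 1
        push_cast
        ring
      nlinarith [Real.sq_sqrt (by linarith : (0:ℝ) ≤ 1 - b),
        Real.sqrt_nonneg (1 - b), Real.exp_pos ((-b - b^2)/2)]
    have hsqrtpos : 0 < Real.sqrt (1 - b) :=
      Real.sqrt_pos.mpr (by linarith)
    have hinv : (Real.sqrt (1 - b))⁻¹ ≤ Real.exp ((b + b^2)/2) := by
      have h' : Real.exp (-((b + b^2)/2)) ≤ Real.sqrt (1 - b) := by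
        rw [show -((b + b^2)/2) = -(b + b^2)/2 from by ring]
        exact hsqrt
      calc (Real.sqrt (1 - b))⁻¹ ≤ (Real.exp (-((b + b^2)/2)))⁻¹ := by
            gcongr
        _ = Real.exp ((b + b^2)/2) := by rw [← Real.exp_neg, neg_neg]
    calc Real.exp (-(b/2)) * (Real.sqrt (1 - 2 * (b/2)))⁻¹
        ≤ Real.exp (-(b/2)) * Real.exp ((b + b^2)/2) := by
          rw [h2c]
          exact mul_le_mul_of_nonneg_left hinv (Real.exp_pos _).le
      _ = Real.exp (b^2/2) := by rw [← Real.exp_add]; congr 1; ring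
  -- combine
  calc ∏ i, mgf (X i) μ (θ / 2)
      ≤ ∏ i, Real.exp ((θ * l i) ^ 2 / 2) := by
        refine Finset.prod_le_prod (fun i _ => ?_) (fun i _ => hfac i)
        rw [hci i]
        positivity
    _ = Real.exp (∑ i, (θ * l i) ^ 2 / 2) := by rw [Real.exp_sum]
    _ = Real.exp (1/4) := by
        congr 1
        have : ∑ i, (θ * l i) ^ 2 / 2 = θ^2 * (∑ i, (l i)^2) / 2 := by
          simp only [mul_pow]
          rw [← Finset.sum_div, ← Finset.mul_sum]
        rw [this]
        nlinarith [hθsq]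
end

section
/- Let d ≥ 2 be an integer and let 𝕊^d be the unit sphere in ℝ^{d+1}, equipped with the spherical distance ρ(u,v) = arccos⟨u,v⟩. Let x, y ∈ 𝕊^d with ε := ρ(x,y) ∈ (0, π), and let r ∈ (0, π). Let P_x(r) and P_y(r) be the uniform probability measures on the sets S_x(r) = {z ∈ 𝕊^d : ρ(x,z) = r} and S_y(r) = {z ∈ 𝕊^d : ρ(y,z) = r}. Then W₁(P_x(r), P_y(r)) ≤ ε·(1 − ((d−1)/(2d))·sin²(r)); equivalently, the coarse Ricci curvature κ(x,y) := 1 − W₁(P_x(r), P_y(r))/ρ(x,y) satisfies κ(x,y) ≥ ((d−1)/(2d))·sin²(r). -/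
set_option maxHeartbeats 1000000

open MeasureTheory Real

/-- The spherical (geodesic) distance `ρ(u,v) = arccos ⟨u,v⟩` on the unit sphere. -/
noncomputable def sphDist {d : ℕ} (u v : EuclideanSpace ℝ (Fin (d + 1))) : ℝ :=
  Real.arccos (inner ℝ u v)

/-- The set of points of the unit sphere `𝕊^d ⊆ ℝ^{d+1}` at spherical distance `r`
from `x`. -/
def sphShell (d : ℕ) (x : EuclideanSpace ℝ (Fin (d + 1))) (r : ℝ) :
    Set (EuclideanSpace ℝ (Fin (d + 1))) :=
  {z | ‖z‖ = 1 ∧ sphDist x z = r}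

/-- The uniform probability measure on the set of points of `𝕊^d` at spherical distance
`r` from `x`: the `(d-1)`-dimensional Hausdorff measure restricted to that set and
normalized to total mass one. -/
noncomputable def uniformShell (d : ℕ) (x : EuclideanSpace ℝ (Fin (d + 1))) (r : ℝ) :
    Measure (EuclideanSpace ℝ (Fin (d + 1))) :=
  (μH[(d : ℝ) - 1] (sphShell d x r))⁻¹ • (μH[(d : ℝ) - 1]).restrict (sphShell d x r)

/-- The `L¹`-Wasserstein distance between two measures `μ, ν` with respect to a distance
function `ρ`: the infimum over couplings `ξ` of `μ` and `ν` of `∬ ρ dξ`. -/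
noncomputable def W1 {X : Type*} [MeasurableSpace X] (ρ : X → X → ℝ)
    (μ ν : Measure X) : ℝ :=
  ⨅ ξ : {ξ : Measure (X × X) // ξ.map Prod.fst = μ ∧ ξ.map Prod.snd = ν},
    ∫ p, ρ p.1 p.2 ∂(ξ : Measure (X × X))

section Helpers

local notation "⟪" a ", " b "⟫" => @inner ℝ _ _ a b

variable {E : Type*} [NormedAddCommGroup E] [InnerProductSpace ℝ E]

/-- Rotation by angle `θ` in the plane spanned by the orthonormal pair `u, v`. -/
noncomputable def rotAux (u v : E) (θ : ℝ) (z : E) : E :=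
  z + ((Real.cos θ - 1) * ⟪z, u⟫ - Real.sin θ * ⟪z, v⟫) • u
    + (Real.sin θ * ⟪z, u⟫ + (Real.cos θ - 1) * ⟪z, v⟫) • v

theorem inner_rotAux {u v : E} (hu : ⟪u, u⟫ = (1:ℝ)) (hv : ⟪v, v⟫ = (1:ℝ))
    (huv : ⟪u, v⟫ = (0:ℝ)) (θ : ℝ) (z w : E) :
    ⟪rotAux u v θ z, rotAux u v θ w⟫ = ⟪z, w⟫ := by
  have hvu : ⟪v, u⟫ = (0:ℝ) := by rw [real_inner_comm]; exact huv
  have h1 : ⟪u, z⟫ = ⟪z, u⟫ := real_inner_comm z u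
  have h2 : ⟪v, z⟫ = ⟪z, v⟫ := real_inner_comm z v
  have h3 : ⟪u, w⟫ = ⟪w, u⟫ := real_inner_comm w u
  have h4 : ⟪v, w⟫ = ⟪w, v⟫ := real_inner_comm w v
  simp only [rotAux, inner_add_left, inner_add_right, real_inner_smul_left,
    real_inner_smul_right, hu, hv, huv, hvu, h1, h2, h3, h4]
  linear_combination (⟪z, u⟫ * ⟪w, u⟫ + ⟪z, v⟫ * ⟪w, v⟫) * (Real.sin_sq_add_cos_sq θ)

theorem rotAux_inner_u {u v : E} (hu : ⟪u, u⟫ = (1:ℝ))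
    (hvu : ⟪v, u⟫ = (0:ℝ)) (θ : ℝ) (z : E) :
    ⟪rotAux u v θ z, u⟫ = Real.cos θ * ⟪z, u⟫ - Real.sin θ * ⟪z, v⟫ := by
  simp only [rotAux, inner_add_left, real_inner_smul_left, hu, hvu]; ring

theorem rotAux_inner_v {u v : E} (hv : ⟪v, v⟫ = (1:ℝ))
    (huv : ⟪u, v⟫ = (0:ℝ)) (θ : ℝ) (z : E) :
    ⟪rotAux u v θ z, v⟫ = Real.sin θ * ⟪z, u⟫ + Real.cos θ * ⟪z, v⟫ := by
  simp only [rotAux, inner_add_left, real_inner_smul_left, hv, huv]; ring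

theorem rotAux_inner_orth {u v w : E} (huw : ⟪u, w⟫ = (0:ℝ)) (hvw : ⟪v, w⟫ = (0:ℝ))
    (θ : ℝ) (z : E) : ⟪rotAux u v θ z, w⟫ = ⟪z, w⟫ := by
  simp [rotAux, inner_add_left, real_inner_smul_left, huw, hvw]

theorem inner_self_rotAux (u v : E) (θ : ℝ) (z : E) :
    ⟪z, rotAux u v θ z⟫ = ⟪z, z⟫ + (Real.cos θ - 1) * (⟪z, u⟫^2 + ⟪z, v⟫^2) := by
  simp only [rotAux, inner_add_right, real_inner_smul_right]; ring

theorem sum_sq_inner_le {u v : E} (hu : ⟪u, u⟫ = (1:ℝ)) (hv : ⟪v, v⟫ = (1:ℝ))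
    (huv : ⟪u, v⟫ = (0:ℝ)) (z : E) : ⟪z, u⟫^2 + ⟪z, v⟫^2 ≤ ⟪z, z⟫ := by
  have hvu : ⟪v, u⟫ = (0:ℝ) := by rw [real_inner_comm]; exact huv
  have h1 : ⟪u, z⟫ = ⟪z, u⟫ := real_inner_comm z u
  have h2 : ⟪v, z⟫ = ⟪z, v⟫ := real_inner_comm z v
  have h : (0:ℝ) ≤ ⟪z - ⟪z, u⟫ • u - ⟪z, v⟫ • v, z - ⟪z, u⟫ • u - ⟪z, v⟫ • v⟫ :=
    real_inner_self_nonneg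
  simp only [inner_sub_left, inner_sub_right, real_inner_smul_left, real_inner_smul_right,
    hu, hv, huv, hvu, h1, h2] at h
  nlinarith [h]

theorem rotAux_rotAux {u v : E} (hu : ⟪u, u⟫ = (1:ℝ)) (hv : ⟪v, v⟫ = (1:ℝ))
    (huv : ⟪u, v⟫ = (0:ℝ)) (θ : ℝ) (z : E) :
    rotAux u v (-θ) (rotAux u v θ z) = z := by
  have hvu : ⟪v, u⟫ = (0:ℝ) := by rw [real_inner_comm]; exact huv
  have ha' := rotAux_inner_u hu hvu θ z
  have hb' := rotAux_inner_v hv huv θ z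
  conv_lhs => rw [rotAux, ha', hb']
  have hA : (Real.cos (-θ) - 1) * (Real.cos θ * ⟪z, u⟫ - Real.sin θ * ⟪z, v⟫)
      - Real.sin (-θ) * (Real.sin θ * ⟪z, u⟫ + Real.cos θ * ⟪z, v⟫)
      = -((Real.cos θ - 1) * ⟪z, u⟫ - Real.sin θ * ⟪z, v⟫) := by
    simp only [Real.cos_neg, Real.sin_neg]
    linear_combination ⟪z, u⟫ * (Real.sin_sq_add_cos_sq θ)
  have hB : Real.sin (-θ) * (Real.cos θ * ⟪z, u⟫ - Real.sin θ * ⟪z, v⟫)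
      + (Real.cos (-θ) - 1) * (Real.sin θ * ⟪z, u⟫ + Real.cos θ * ⟪z, v⟫)
      = -(Real.sin θ * ⟪z, u⟫ + (Real.cos θ - 1) * ⟪z, v⟫) := by
    simp only [Real.cos_neg, Real.sin_neg]
    linear_combination ⟪z, v⟫ * (Real.sin_sq_add_cos_sq θ)
  rw [hA, hB, rotAux]
  module

/-- The rotation as an isometry equivalence. -/
noncomputable def rotIso (u v : E) (hu : ⟪u, u⟫ = (1:ℝ)) (hv : ⟪v, v⟫ = (1:ℝ))
    (huv : ⟪u, v⟫ = (0:ℝ)) (θ : ℝ) : E ≃ᵢ E where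
  toFun := rotAux u v θ
  invFun := rotAux u v (-θ)
  left_inv z := rotAux_rotAux hu hv huv θ z
  right_inv z := by
    have := rotAux_rotAux hu hv huv (-θ) z
    rwa [neg_neg] at this
  isometry_toFun := by
    refine Isometry.of_dist_eq fun z w => ?_
    rw [dist_eq_norm, dist_eq_norm]
    have h2 : ‖rotAux u v θ z - rotAux u v θ w‖ ^ 2 = ‖z - w‖ ^ 2 := by
      rw [@norm_sub_sq_real, @norm_sub_sq_real, ← real_inner_self_eq_norm_sq,
        ← real_inner_self_eq_norm_sq, ← real_inner_self_eq_norm_sq,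
        ← real_inner_self_eq_norm_sq, inner_rotAux hu hv huv,
        inner_rotAux hu hv huv, inner_rotAux hu hv huv]
    nlinarith [norm_nonneg (rotAux u v θ z - rotAux u v θ w), norm_nonneg (z - w)]

theorem norm_rotAux {u v : E} (hu : ⟪u, u⟫ = (1:ℝ)) (hv : ⟪v, v⟫ = (1:ℝ))
    (huv : ⟪u, v⟫ = (0:ℝ)) (θ : ℝ) (z : E) : ‖rotAux u v θ z‖ = ‖z‖ := by
  have h := inner_rotAux hu hv huv θ z z
  rw [real_inner_self_eq_norm_sq, real_inner_self_eq_norm_sq] at h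
  rw [← Real.sqrt_sq (norm_nonneg (rotAux u v θ z)), ← Real.sqrt_sq (norm_nonneg z), h]

theorem one_sub_cos_eq (t : ℝ) : 1 - Real.cos t = 2 * Real.sin (t/2)^2 := by
  have h := Real.cos_two_mul (t/2)
  have h2 := Real.sin_sq_add_cos_sq (t/2)
  have ht : (2:ℝ) * (t/2) = t := by ring
  rw [ht] at h
  nlinarith

theorem arccos_le_of_cos_le {t s : ℝ} (hs0 : 0 ≤ s) (hsπ : s ≤ π) (h : Real.cos s ≤ t) :
    Real.arccos t ≤ s := by
  have h1 : Real.arcsin (Real.cos s) ≤ Real.arcsin t := Real.monotone_arcsin h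
  have h2 : Real.arccos (Real.cos s) = s := Real.arccos_cos hs0 hsπ
  simp only [Real.arccos] at h2 ⊢
  linarith

theorem cost_bound {ε : ℝ} (hε0 : 0 < ε) (hεπ : ε ≤ π) {c2 : ℝ} (hc0 : 0 ≤ c2) (hc1 : c2 ≤ 1) :
    Real.arccos (1 - (1 - Real.cos ε) * c2) ≤ ε * (1 - (1 - c2)/2) := by
  set c := Real.sqrt c2 with hc
  have hcnn : 0 ≤ c := Real.sqrt_nonneg _
  have hcsq : c ^ 2 = c2 := Real.sq_sqrt hc0
  have hcle1 : c ≤ 1 := by nlinarith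
  have step1 : Real.arccos (1 - (1 - Real.cos ε) * c2) ≤ ε * c := by
    apply arccos_le_of_cos_le (by positivity)
    · calc ε * c ≤ π * 1 := by apply mul_le_mul hεπ hcle1 hcnn Real.pi_pos.le
        _ = π := mul_one π
    · have key : c * Real.sin (ε/2) ≤ Real.sin (c * (ε/2)) := by
        have hmem1 : ε/2 ∈ Set.Icc (0:ℝ) π := ⟨by linarith, by linarith [Real.pi_pos]⟩
        have hmem0 : (0:ℝ) ∈ Set.Icc (0:ℝ) π := ⟨le_refl _, Real.pi_pos.le⟩
        have := strictConcaveOn_sin_Icc.concaveOn.2 hmem1 hmem0 hcnn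
          (show (0:ℝ) ≤ 1 - c by linarith) (show c + (1 - c) = 1 by ring)
        simpa using this
      have hsin_nonneg : 0 ≤ Real.sin (ε/2) :=
        Real.sin_nonneg_of_nonneg_of_le_pi (by linarith) (by linarith [Real.pi_pos])
      have h1 : 1 - Real.cos (ε * c) = 2 * Real.sin (ε * c / 2)^2 := one_sub_cos_eq _
      have h2 : 1 - Real.cos ε = 2 * Real.sin (ε/2)^2 := one_sub_cos_eq _
      have hhalf : ε * c / 2 = c * (ε / 2) := by ring
      rw [hhalf] at h1
      have h0 : 0 ≤ c * Real.sin (ε/2) := mul_nonneg hcnn hsin_nonneg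
      have hsq : (c * Real.sin (ε/2))^2 ≤ Real.sin (c * (ε/2))^2 :=
        pow_le_pow_left₀ h0 key 2
      have hprod : (1 - Real.cos ε) * c2 = 2 * (c * Real.sin (ε/2))^2 := by
        rw [h2, ← hcsq]; ring
      linarith
  calc Real.arccos (1 - (1 - Real.cos ε) * c2) ≤ ε * c := step1
    _ ≤ ε * (1 - (1 - c2)/2) := by
        apply mul_le_mul_of_nonneg_left _ hε0.le
        nlinarith [sq_nonneg (1 - c)]

theorem W1_le {X : Type*} [MeasurableSpace X] (ρ : X → X → ℝ) (μ ν : Measure X)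
    (hρ : ∀ a b, 0 ≤ ρ a b) (ξ : Measure (X × X))
    (h1 : ξ.map Prod.fst = μ) (h2 : ξ.map Prod.snd = ν) :
    W1 ρ μ ν ≤ ∫ p, ρ p.1 p.2 ∂ξ := by
  have hbdd : BddBelow (Set.range fun ξ' : {ξ : Measure (X × X) //
      ξ.map Prod.fst = μ ∧ ξ.map Prod.snd = ν} =>
      ∫ p, ρ p.1 p.2 ∂(ξ' : Measure (X × X))) := by
    refine ⟨0, ?_⟩
    rintro z ⟨ξ', rfl⟩
    exact integral_nonneg fun p => hρ _ _
  exact ciInf_le hbdd ⟨ξ, h1, h2⟩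

end Helpers

local notation "⟪" a ", " b "⟫" => @inner ℝ _ _ a b

/-- Corollary 7.6 of the paper (clean form): for `x, y ∈ 𝕊^d` at spherical distance
`ε ∈ (0, π)` and `r ∈ (0, π)`,
`W₁(P_x(r), P_y(r)) ≤ ε (1 - ((d-1)/(2d)) sin²r)`; equivalently the coarse Ricci
curvature `κ(x,y) = 1 - W₁/ρ(x,y)` is at least `((d-1)/(2d)) sin²r`. -/
theorem coarseRicci_spherical_shells
    (d : ℕ) (hd : 2 ≤ d)
    (x y : EuclideanSpace ℝ (Fin (d + 1))) (hx : ‖x‖ = 1) (hy : ‖y‖ = 1)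
    (ε : ℝ) (hεdef : ε = sphDist x y) (hε : ε ∈ Set.Ioo 0 π)
    (r : ℝ) (hr : r ∈ Set.Ioo 0 π) :
    W1 sphDist (uniformShell d x r) (uniformShell d y r)
      ≤ ε * (1 - (((d : ℝ) - 1) / (2 * d)) * Real.sin r ^ 2) := by
  classical
  obtain ⟨hε0, hεπ⟩ := hε
  obtain ⟨hr0, hrπ⟩ := hr
  have hπ := Real.pi_pos
  have hd2 : (2:ℝ) ≤ (d:ℝ) := by exact_mod_cast hd
  have hRHS : 0 ≤ ε * (1 - (((d:ℝ)-1)/(2*d)) * Real.sin r ^ 2) := by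
    have h1 : ((d:ℝ)-1)/(2*d) ≤ 1/2 := by
      rw [div_le_iff₀ (by linarith : (0:ℝ) < 2*d)]; linarith
    have h2 : Real.sin r ^ 2 ≤ 1 := Real.sin_sq_le_one r
    have h3 : 0 ≤ ((d:ℝ)-1)/(2*d) := by
      apply div_nonneg (by linarith) (by linarith)
    have h4 : ((d:ℝ)-1)/(2*d) * Real.sin r ^ 2 ≤ 1/2 * 1 :=
      mul_le_mul h1 h2 (sq_nonneg _) (by norm_num)
    apply mul_nonneg hε0.le
    linarith
  have hsphDist_nonneg : ∀ a b : EuclideanSpace ℝ (Fin (d+1)), 0 ≤ sphDist a b :=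
    fun a b => Real.arccos_nonneg _
  have hxx : ⟪x, x⟫ = (1:ℝ) := by
    rw [real_inner_self_eq_norm_sq, hx]; norm_num
  have hyy : ⟪y, y⟫ = (1:ℝ) := by
    rw [real_inner_self_eq_norm_sq, hy]; norm_num
  have hxyabs : |(⟪x, y⟫ : ℝ)| ≤ 1 := by
    have := abs_real_inner_le_norm x y
    rwa [hx, hy, mul_one] at this
  have hcosε : Real.cos ε = ⟪x, y⟫ := by
    rw [hεdef, sphDist, Real.cos_arccos (by linarith [abs_le.1 hxyabs |>.1])
      (by linarith [abs_le.1 hxyabs |>.2])]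
  have hsinε : 0 < Real.sin ε := Real.sin_pos_of_pos_of_lt_pi hε0 hεπ
  set e : EuclideanSpace ℝ (Fin (d+1)) := (Real.sin ε)⁻¹ • (y - Real.cos ε • x) with he_def
  have hxe : ⟪x, e⟫ = (0:ℝ) := by
    simp only [he_def, real_inner_smul_right, inner_sub_right, hxx, hcosε]
    ring
  have hee : ⟪e, e⟫ = (1:ℝ) := by
    have hsq : Real.sin ε ^ 2 = 1 - Real.cos ε ^ 2 := Real.sin_sq ε
    have hyx : ⟪y, x⟫ = (⟪x, y⟫ : ℝ) := real_inner_comm x y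
    have expand : (⟪e, e⟫:ℝ)
        = (Real.sin ε)⁻¹ * ((Real.sin ε)⁻¹ * (1 - Real.cos ε * Real.cos ε)) := by
      simp only [he_def, real_inner_smul_left, inner_sub_left, real_inner_smul_right,
        inner_sub_right, hxx, hyy, hyx, ← hcosε]
      ring
    have h5 : 1 - Real.cos ε * Real.cos ε = Real.sin ε * Real.sin ε := by nlinarith [hsq]
    rw [expand, h5]
    field_simp
  set R := rotIso x e hxx hee hxe ε with hR_def
  have hRapp : ∀ z, R z = rotAux x e ε z := fun z => rfl
  have hRx : R x = y := by
    rw [hRapp, rotAux]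
    simp only [hxx, hxe, mul_one, mul_zero, sub_zero, add_zero]
    rw [he_def, smul_smul, mul_inv_cancel₀ hsinε.ne', one_smul]
    module
  have hcont_inner : ∀ w : EuclideanSpace ℝ (Fin (d+1)), Continuous fun z => (⟪w, z⟫ : ℝ) :=
    fun w => continuous_const.inner continuous_id
  have hclosed : ∀ (w : EuclideanSpace ℝ (Fin (d+1))) (r' : ℝ), IsClosed (sphShell d w r') := by
    intro w r'
    have h1 : IsClosed {z : EuclideanSpace ℝ (Fin (d+1)) | ‖z‖ = 1} :=
      isClosed_eq continuous_norm continuous_const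
    have h2 : IsClosed {z : EuclideanSpace ℝ (Fin (d+1)) | sphDist w z = r'} :=
      isClosed_eq (Real.continuous_arccos.comp (hcont_inner w)) continuous_const
    have : sphShell d w r' = {z : EuclideanSpace ℝ (Fin (d+1)) | ‖z‖ = 1} ∩
        {z : EuclideanSpace ℝ (Fin (d+1)) | sphDist w z = r'} := rfl
    rw [this]
    exact h1.inter h2
  have hmx : MeasurableSet (sphShell d x r) := (hclosed x r).measurableSet
  have hmsy : MeasurableSet (sphShell d y r) := (hclosed y r).measurableSet
  have hnormR : ∀ z, ‖R z‖ = ‖z‖ := fun z => norm_rotAux hxx hee hxe ε z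
  have hpre : ⇑R ⁻¹' sphShell d y r = sphShell d x r := by
    ext z
    simp only [Set.mem_preimage, sphShell, Set.mem_setOf_eq, sphDist]
    have h1 : ‖R z‖ = ‖z‖ := hnormR z
    have h2 : (⟪y, R z⟫:ℝ) = ⟪x, z⟫ := by
      conv_lhs => rw [← hRx]
      rw [hRapp, hRapp]
      exact inner_rotAux hxx hee hxe ε x z
    rw [h1, h2]
  have hmapH : Measure.map (⇑R) (μH[(d:ℝ)-1] :
      Measure (EuclideanSpace ℝ (Fin (d+1)))) = μH[(d:ℝ)-1] :=
    R.map_hausdorffMeasure _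
  have hmeq : μH[(d:ℝ)-1] (sphShell d y r) = μH[(d:ℝ)-1] (sphShell d x r) := by
    rw [← hpre, R.hausdorffMeasure_preimage]
  set m := μH[(d:ℝ)-1] (sphShell d x r) with hm_def
  rcases eq_or_ne m 0 with hm0 | hm0
  · have hux : uniformShell d x r = 0 := by
      rw [uniformShell, Measure.restrict_eq_zero.mpr
        (show (μH[(d:ℝ)-1]) (sphShell d x r) = 0 from hm0), smul_zero]
    have huy : uniformShell d y r = 0 := by
      rw [uniformShell, Measure.restrict_eq_zero.mpr
        (show (μH[(d:ℝ)-1]) (sphShell d y r) = 0 from hmeq.trans hm0), smul_zero]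
    calc W1 sphDist (uniformShell d x r) (uniformShell d y r)
        ≤ ∫ p, sphDist p.1 p.2 ∂(0 : Measure (EuclideanSpace ℝ (Fin (d+1)) ×
            EuclideanSpace ℝ (Fin (d+1)))) :=
          W1_le _ _ _ hsphDist_nonneg 0 (by simp [hux]) (by simp [huy])
      _ = 0 := by simp
      _ ≤ _ := hRHS
  rcases eq_or_ne m ⊤ with hmtop | hmtop
  · have hux : uniformShell d x r = 0 := by
      rw [uniformShell, show (μH[(d:ℝ)-1]) (sphShell d x r) = ⊤ from hmtop]
      simp
    have huy : uniformShell d y r = 0 := by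
      rw [uniformShell, show (μH[(d:ℝ)-1]) (sphShell d y r) = ⊤ from hmeq.trans hmtop]
      simp
    calc W1 sphDist (uniformShell d x r) (uniformShell d y r)
        ≤ ∫ p, sphDist p.1 p.2 ∂(0 : Measure (EuclideanSpace ℝ (Fin (d+1)) ×
            EuclideanSpace ℝ (Fin (d+1)))) :=
          W1_le _ _ _ hsphDist_nonneg 0 (by simp [hux]) (by simp [huy])
      _ = 0 := by simp
      _ ≤ _ := hRHS
  -- MAIN CASE: 0 < m < ∞
  have he_norm : ‖e‖ = 1 := by
    have h2 : ‖e‖^2 = 1 := by rw [← real_inner_self_eq_norm_sq]; exact hee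
    rw [← Real.sqrt_sq (norm_nonneg e), h2, Real.sqrt_one]
  set μ₀ : Measure (EuclideanSpace ℝ (Fin (d+1))) :=
    (μH[(d:ℝ)-1]).restrict (sphShell d x r) with hμ₀
  haveI : IsFiniteMeasure μ₀ :=
    ⟨by rw [hμ₀, Measure.restrict_apply_univ]; exact lt_top_iff_ne_top.mpr hmtop⟩
  have hμ₀univ : μ₀ Set.univ = m := by rw [hμ₀, Measure.restrict_apply_univ]
  have huxdef : uniformShell d x r = m⁻¹ • μ₀ := rfl
  set T : EuclideanSpace ℝ (Fin (d+1)) →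
      (EuclideanSpace ℝ (Fin (d+1)) × EuclideanSpace ℝ (Fin (d+1))) := fun z => (z, R z) with hT
  have hTmeas : Measurable T := measurable_id.prodMk R.continuous.measurable
  set ξ := (uniformShell d x r).map T with hξ
  have hfst : ξ.map Prod.fst = uniformShell d x r := by
    rw [hξ, Measure.map_map measurable_fst hTmeas]
    have hc : (Prod.fst ∘ T) = id := rfl
    rw [hc, Measure.map_id]
  have hmapR : μ₀.map (⇑R) = (μH[(d:ℝ)-1]).restrict (sphShell d y r) := by
    rw [hμ₀, ← hpre, ← Measure.restrict_map R.continuous.measurable hmsy, hmapH]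
  have hsnd : ξ.map Prod.snd = uniformShell d y r := by
    rw [hξ, Measure.map_map measurable_snd hTmeas]
    have hc : (Prod.snd ∘ T) = ⇑R := rfl
    rw [hc, huxdef, Measure.map_smul, hmapR, uniformShell, hmeq]
  have hcostCont : Continuous fun p : EuclideanSpace ℝ (Fin (d+1)) ×
      EuclideanSpace ℝ (Fin (d+1)) => sphDist p.1 p.2 :=
    Real.continuous_arccos.comp (continuous_fst.inner continuous_snd)
  have hW1 : W1 sphDist (uniformShell d x r) (uniformShell d y r) ≤
      ∫ p, sphDist p.1 p.2 ∂ξ := W1_le _ _ _ hsphDist_nonneg ξ hfst hsnd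
  have hint1 : ∫ p, sphDist p.1 p.2 ∂ξ = ∫ z, sphDist z (R z) ∂(uniformShell d x r) := by
    rw [hξ, integral_map hTmeas.aemeasurable hcostCont.aestronglyMeasurable]
  have hsmulint : ∫ z, sphDist z (R z) ∂(uniformShell d x r)
      = (m.toReal)⁻¹ * ∫ z, sphDist z (R z) ∂μ₀ := by
    rw [huxdef, integral_smul_measure, ENNReal.toReal_inv, smul_eq_mul]
  -- facts about points on the shell
  have hshell_inner : ∀ z ∈ sphShell d x r, (⟪z, x⟫:ℝ) = Real.cos r := by
    intro z hz
    obtain ⟨hz1, hz2⟩ := hz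
    have habs : |(⟪x, z⟫:ℝ)| ≤ 1 := by
      have := abs_real_inner_le_norm x z
      rwa [hx, hz1, mul_one] at this
    have h2 : (⟪x, z⟫:ℝ) = Real.cos r := by
      rw [← hz2, sphDist, Real.cos_arccos (by linarith [(abs_le.1 habs).1])
        (by linarith [(abs_le.1 habs).2])]
    rw [real_inner_comm]; exact h2
  have hbound : ∀ z ∈ sphShell d x r, (⟪z,x⟫:ℝ)^2 + (⟪z,e⟫:ℝ)^2 ≤ 1 := by
    intro z hz
    have h := sum_sq_inner_le hxx hee hxe z
    rwa [real_inner_self_eq_norm_sq, hz.1, one_pow] at h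
  have hpt : ∀ z ∈ sphShell d x r,
      sphDist z (R z) ≤ ε - ε * Real.sin r^2/2 + ε/2 * (⟪z,e⟫:ℝ)^2 := by
    intro z hz
    have hzx := hshell_inner z hz
    have hb := hbound z hz
    have hinner_val : (⟪z, R z⟫:ℝ)
        = 1 - (1 - Real.cos ε) * ((⟪z,x⟫:ℝ)^2 + (⟪z,e⟫:ℝ)^2) := by
      rw [hRapp, inner_self_rotAux, real_inner_self_eq_norm_sq, hz.1]; ring
    have hcb := cost_bound hε0 hεπ.le
      (c2 := (⟪z,x⟫:ℝ)^2 + (⟪z,e⟫:ℝ)^2) (by positivity) hb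
    have heq : sphDist z (R z)
        = Real.arccos (1 - (1 - Real.cos ε) * ((⟪z,x⟫:ℝ)^2 + (⟪z,e⟫:ℝ)^2)) := by
      rw [sphDist, hinner_val]
    rw [heq]
    calc Real.arccos (1 - (1 - Real.cos ε) * ((⟪z,x⟫:ℝ)^2 + (⟪z,e⟫:ℝ)^2))
        ≤ ε * (1 - (1 - ((⟪z,x⟫:ℝ)^2 + (⟪z,e⟫:ℝ)^2))/2) := hcb
      _ = ε - ε * Real.sin r^2/2 + ε/2 * (⟪z,e⟫:ℝ)^2 := by
          rw [hzx, Real.sin_sq]; ring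
  -- integrability
  have hcostz : Continuous fun z => sphDist z (R z) :=
    Real.continuous_arccos.comp (continuous_id.inner R.continuous)
  have hintf : Integrable (fun z => sphDist z (R z)) μ₀ := by
    apply (integrable_const π).mono' hcostz.aestronglyMeasurable
    apply ae_of_all
    intro z
    rw [Real.norm_eq_abs, abs_of_nonneg (hsphDist_nonneg _ _)]
    exact Real.arccos_le_pi _
  have hintsq : ∀ w : EuclideanSpace ℝ (Fin (d+1)), ‖w‖ = 1 →
      Integrable (fun z => (⟪z,w⟫:ℝ)^2) μ₀ := by
    intro w hw
    apply (integrable_const (1:ℝ)).mono'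
      ((continuous_id.inner continuous_const).pow 2).aestronglyMeasurable
    rw [hμ₀]
    refine (ae_restrict_iff' hmx).mpr (ae_of_all _ fun z hz => ?_)
    rw [Real.norm_eq_abs, abs_of_nonneg (sq_nonneg _)]
    have h1 : |(⟪z,w⟫:ℝ)| ≤ 1 := by
      have := abs_real_inner_le_norm z w
      rwa [hz.1, hw, mul_one] at this
    nlinarith [sq_abs (⟪z,w⟫:ℝ), abs_nonneg (⟪z,w⟫:ℝ)]
  -- THE MOMENT COMPUTATION
  have hIe : ∫ z, (⟪z,e⟫:ℝ)^2 ∂μ₀ = Real.sin r^2 / d * m.toReal := by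
    have hne : x ≠ e := by
      intro hcontra
      rw [hcontra] at hxe
      rw [hxe] at hee
      exact one_ne_zero hee.symm
    have hON : Orthonormal ℝ ((↑) : ({x, e} :
        Set (EuclideanSpace ℝ (Fin (d+1)))) → EuclideanSpace ℝ (Fin (d+1))) := by
      rw [orthonormal_subtype_iff_ite]
      intro v hv w hw
      simp only [Set.mem_insert_iff, Set.mem_singleton_iff] at hv hw
      rcases hv with rfl | rfl <;> rcases hw with rfl | rfl
      · simp [hxx, hx]
      · rw [if_neg hne]; exact hxe
      · rw [if_neg (Ne.symm hne), real_inner_comm]; exact hxe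
      · simp [hee, he_norm]
    obtain ⟨u, b, hsub, hcoe⟩ := hON.exists_orthonormalBasis_extension
    have hxu : x ∈ u := hsub (Set.mem_insert _ _)
    have heu : e ∈ u := hsub (Set.mem_insert_of_mem _ rfl)
    have hcard : Fintype.card u = d + 1 := by
      have h1 := Module.finrank_eq_card_basis b.toBasis
      rw [finrank_euclideanSpace_fin] at h1
      exact h1.symm
    have hONu : ∀ (i j : u), (⟪(i:EuclideanSpace ℝ (Fin (d+1))),
        (j:EuclideanSpace ℝ (Fin (d+1)))⟫:ℝ) = if i = j then 1 else 0 := by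
      have hb := b.orthonormal
      rw [orthonormal_iff_ite] at hb
      intro i j
      have h := hb i j
      rwa [hcoe] at h
    have hParseval : ∀ z : EuclideanSpace ℝ (Fin (d+1)),
        ∑ i : u, (⟪z, (i:EuclideanSpace ℝ (Fin (d+1)))⟫:ℝ)^2 = ‖z‖^2 := by
      intro z
      have h := b.sum_inner_mul_inner z z
      simp only [hcoe] at h
      rw [← real_inner_self_eq_norm_sq, ← h]
      apply Finset.sum_congr rfl
      intro i _
      rw [sq, real_inner_comm]
    have hnorm1 : ∀ i : u, ‖(i : EuclideanSpace ℝ (Fin (d+1)))‖ = 1 := by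
      intro i
      have h := hONu i i
      rw [if_pos rfl] at h
      have h2 : ‖(i : EuclideanSpace ℝ (Fin (d+1)))‖^2 = 1 := by
        rw [← real_inner_self_eq_norm_sq]; exact h
      rw [← Real.sqrt_sq (norm_nonneg _), h2, Real.sqrt_one]
    have hswap : ∀ w : EuclideanSpace ℝ (Fin (d+1)), w ∈ u → w ≠ x →
        ∫ z, (⟪z,w⟫:ℝ)^2 ∂μ₀ = ∫ z, (⟪z,e⟫:ℝ)^2 ∂μ₀ := by
      intro w hwu hwx
      by_cases hwe : w = e
      · rw [hwe]
      · have hww : ⟪w,w⟫ = (1:ℝ) := by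
          have := hONu ⟨w,hwu⟩ ⟨w,hwu⟩; simpa using this
        have hew : ⟪e,w⟫ = (0:ℝ) := by
          have h := hONu ⟨e,heu⟩ ⟨w,hwu⟩
          rwa [if_neg (fun hc => hwe (congrArg Subtype.val hc).symm)] at h
        have hwx0 : ⟪w,x⟫ = (0:ℝ) := by
          have h := hONu ⟨w,hwu⟩ ⟨x,hxu⟩
          rwa [if_neg (fun hc => hwx (congrArg Subtype.val hc))] at h
        have hex : ⟪e,x⟫ = (0:ℝ) := by rw [real_inner_comm]; exact hxe
        set S := rotIso e w hee hww hew (π/2) with hS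
        have hSapp : ∀ z, S z = rotAux e w (π/2) z := fun _ => rfl
        have hpreS : ⇑S ⁻¹' sphShell d x r = sphShell d x r := by
          ext z
          simp only [Set.mem_preimage, sphShell, Set.mem_setOf_eq, sphDist]
          have h1 : ‖S z‖ = ‖z‖ := norm_rotAux hee hww hew _ z
          have h2 : (⟪x, S z⟫:ℝ) = ⟪x, z⟫ := by
            rw [real_inner_comm, hSapp, rotAux_inner_orth hex hwx0, real_inner_comm]
          rw [h1, h2]
        have hmapS : μ₀.map ⇑S = μ₀ := by
          rw [hμ₀]
          conv_lhs => rw [← hpreS]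
          rw [← Measure.restrict_map S.continuous.measurable hmx,
            S.map_hausdorffMeasure]
        have hmpS : MeasurePreserving (⇑S.toHomeomorph.toMeasurableEquiv) μ₀ μ₀ :=
          ⟨S.continuous.measurable, hmapS⟩
        have hCV := hmpS.integral_comp' (g := fun z => (⟪z,e⟫:ℝ)^2)
        have hval : ∀ z : EuclideanSpace ℝ (Fin (d+1)),
            (⟪(S.toHomeomorph.toMeasurableEquiv z : EuclideanSpace ℝ (Fin (d+1))), e⟫:ℝ)^2
            = (⟪z,w⟫:ℝ)^2 := by
          intro z
          have hwe' : ⟪w,e⟫ = (0:ℝ) := by rw [real_inner_comm]; exact hew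
          have h3 : (⟪S z, e⟫:ℝ)
              = Real.cos (π/2) * ⟪z,e⟫ - Real.sin (π/2) * ⟪z,w⟫ := by
            rw [hSapp]; exact rotAux_inner_u hee hwe' _ z
          have h4 : (S.toHomeomorph.toMeasurableEquiv z :
              EuclideanSpace ℝ (Fin (d+1))) = S z := rfl
          rw [h4, h3, Real.cos_pi_div_two, Real.sin_pi_div_two]
          ring
        calc ∫ z, (⟪z,w⟫:ℝ)^2 ∂μ₀
            = ∫ z, (⟪(S.toHomeomorph.toMeasurableEquiv z :
                EuclideanSpace ℝ (Fin (d+1))), e⟫:ℝ)^2 ∂μ₀ := by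
              apply integral_congr_ae
              apply ae_of_all
              intro z
              exact (hval z).symm
          _ = ∫ z, (⟪z,e⟫:ℝ)^2 ∂μ₀ := hCV
    set i₀ : u := ⟨x, hxu⟩ with hi₀
    have hsum : ∑ i : u, ∫ z, (⟪z,(i:EuclideanSpace ℝ (Fin (d+1)))⟫:ℝ)^2 ∂μ₀
        = m.toReal := by
      rw [← integral_finset_sum _ (fun i _ => hintsq _ (hnorm1 i))]
      have hcongr : ∫ z, (∑ i : u, (⟪z,(i:EuclideanSpace ℝ (Fin (d+1)))⟫:ℝ)^2) ∂μ₀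
          = ∫ z, (1:ℝ) ∂μ₀ := by
        rw [hμ₀]
        apply setIntegral_congr_fun hmx
        intro z hz
        show (∑ i : u, (⟪z,(i:EuclideanSpace ℝ (Fin (d+1)))⟫:ℝ)^2) = 1
        rw [hParseval z, hz.1, one_pow]
      rw [hcongr, integral_const, measureReal_def, hμ₀univ, smul_eq_mul, mul_one]
    have hsplit : ∑ i : u, ∫ z, (⟪z,(i:EuclideanSpace ℝ (Fin (d+1)))⟫:ℝ)^2 ∂μ₀
        = ∫ z, (⟪z,x⟫:ℝ)^2 ∂μ₀ + (d:ℝ) * ∫ z, (⟪z,e⟫:ℝ)^2 ∂μ₀ := by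
      rw [← Finset.add_sum_erase _ _ (Finset.mem_univ i₀)]
      congr 1
      have hconst : ∀ i ∈ Finset.univ.erase i₀,
          ∫ z, (⟪z,(i:EuclideanSpace ℝ (Fin (d+1)))⟫:ℝ)^2 ∂μ₀
          = ∫ z, (⟪z,e⟫:ℝ)^2 ∂μ₀ := by
        intro i hi
        apply hswap i.1 i.2
        intro hix
        exact (Finset.mem_erase.mp hi).1 (Subtype.ext hix)
      rw [Finset.sum_congr rfl hconst, Finset.sum_const,
        Finset.card_erase_of_mem (Finset.mem_univ i₀), Finset.card_univ, hcard]
      simp [nsmul_eq_mul]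
    have hix2 : ∫ z, (⟪z,x⟫:ℝ)^2 ∂μ₀ = Real.cos r^2 * m.toReal := by
      rw [hμ₀]
      have hcg : ∀ z ∈ sphShell d x r, (⟪z,x⟫:ℝ)^2 = Real.cos r^2 := fun z hz => by
        rw [hshell_inner z hz]
      rw [setIntegral_congr_fun hmx hcg, setIntegral_const, smul_eq_mul]
      rw [measureReal_def, show (μH[(d:ℝ)-1]) (sphShell d x r) = m from rfl]
      ring
    have hkey := hsum
    rw [hsplit, hix2] at hkey
    have hd0 : (0:ℝ) < (d:ℝ) := by linarith
    have hd0' : (d:ℝ) ≠ 0 := ne_of_gt hd0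
    have hs2 : Real.sin r^2 = 1 - Real.cos r^2 := Real.sin_sq r
    rw [hs2, div_mul_eq_mul_div, eq_div_iff hd0']
    linear_combination hkey
  -- final assembly
  have hintg : Integrable (fun z => ε - ε * Real.sin r^2/2 + ε/2 * (⟪z,e⟫:ℝ)^2) μ₀ := by
    exact (integrable_const _).add (((hintsq e he_norm)).const_mul _)
  have hmono : ∫ z, sphDist z (R z) ∂μ₀
      ≤ ∫ z, (ε - ε * Real.sin r^2/2 + ε/2 * (⟪z,e⟫:ℝ)^2) ∂μ₀ := by
    apply integral_mono_ae hintf hintg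
    rw [hμ₀]
    exact (ae_restrict_iff' hmx).mpr (ae_of_all _ hpt)
  have hgval : ∫ z, (ε - ε * Real.sin r^2/2 + ε/2 * (⟪z,e⟫:ℝ)^2) ∂μ₀
      = (ε - ε * Real.sin r^2/2) * m.toReal + ε/2 * (Real.sin r^2/d * m.toReal) := by
    rw [integral_add (integrable_const _) ((hintsq e he_norm).const_mul _),
      integral_const, integral_const_mul, hIe, measureReal_def, hμ₀univ]
    simp [smul_eq_mul]; ring
  have hmpos : 0 < m.toReal := ENNReal.toReal_pos hm0 hmtop
  have hfinal : (m.toReal)⁻¹ * ((ε - ε * Real.sin r^2/2) * m.toReal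
      + ε/2 * (Real.sin r^2/d * m.toReal))
      = ε * (1 - (((d:ℝ)-1)/(2*d)) * Real.sin r ^ 2) := by
    have hd0 : (d:ℝ) ≠ 0 := by linarith
    field_simp
    ring
  calc W1 sphDist (uniformShell d x r) (uniformShell d y r)
      ≤ ∫ p, sphDist p.1 p.2 ∂ξ := hW1
    _ = (m.toReal)⁻¹ * ∫ z, sphDist z (R z) ∂μ₀ := by rw [hint1, hsmulint]
    _ ≤ (m.toReal)⁻¹ * ((ε - ε * Real.sin r^2/2) * m.toReal
        + ε/2 * (Real.sin r^2/d * m.toReal)) := by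
        apply mul_le_mul_of_nonneg_left _ (inv_nonneg.mpr ENNReal.toReal_nonneg)
        rw [← hgval]
        exact hmono
    _ = ε * (1 - (((d:ℝ)-1)/(2*d)) * Real.sin r ^ 2) := hfinal
end
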